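/- Let f ∈ ℓ∞ and let T : ℓ² →L[ℂ] ℓ² be a continuous linear map satisfying (T g) n = f n * g n for every g ∈ ℓ² and every n ∈ ℕ (i.e. T is the multiplication operator by f). Then T is a compact operator if and only if Tendsto (fun n => f n) atTop (𝓝 0), i.e. if and only if f ∈ c0. -/

import Mathlib

open Filter Topology ENNReal

noncomputable section

/-- `ℓ∞`, the bounded complex sequences. -/
abbrev linf : Type := lp (fun _ : ℕ => ℂ) ∞

/-- `ℓ²`, the square-summable complex sequences. -/
abbrev ltwo : Type := lp (fun _ : ℕ => ℂ) 2

/-- Evaluation at coordinate `i` as a continuous linear functional on `ℓ²`. -/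
noncomputable def evCLM (i : ℕ) : ltwo →L[ℂ] ℂ :=
  LinearMap.mkContinuous
    { toFun := fun g => g i
      map_add' := fun g h => rfl
      map_smul' := fun c g => rfl } 1
    fun g => by
      rw [one_mul]
      exact lp.norm_apply_le_norm (by norm_num) g i

/-- Rank-one operators are compact. -/
lemma isCompactOperator_smulRight {E F : Type*} [NormedAddCommGroup E] [NormedSpace ℂ E]
    [NormedAddCommGroup F] [NormedSpace ℂ F] (c : E →L[ℂ] ℂ) (x : F) :
    IsCompactOperator (c.smulRight x) := by
  refine ⟨(fun a : ℂ => a • x) '' Metric.closedBall 0 ‖c‖, ?_, ?_⟩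
  · exact (isCompact_closedBall 0 ‖c‖).image (continuous_id.smul continuous_const)
  · filter_upwards [Metric.closedBall_mem_nhds (0 : E) one_pos] with g hg
    exact ⟨c g, by simpa using c.unit_le_opNorm g (mem_closedBall_zero_iff.1 hg), rfl⟩

/-- The multiplication operator on `ℓ²` by a bounded sequence `f ∈ ℓ∞` is a compact
operator iff `f` tends to `0`, i.e. iff `f ∈ c₀`. -/
theorem isCompactOperator_mul_iff_tendsto_zero
    (f : linf) (T : ltwo →L[ℂ] ltwo)
    (hT : ∀ (g : ltwo) (n : ℕ), (T g : ∀ _ : ℕ, ℂ) n = (f : ∀ _ : ℕ, ℂ) n * (g : ∀ _ : ℕ, ℂ) n) :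
    IsCompactOperator T ↔ Tendsto (fun n => (f : ∀ _ : ℕ, ℂ) n) atTop (𝓝 0) := by
  have hp2 : (0:ℝ) < (2 : ℝ≥0∞).toReal := by norm_num
  constructor
  · -- compact ⇒ f ∈ c₀
    intro hc
    by_contra h
    obtain ⟨ε, hε, hfreq⟩ : ∃ ε > 0, ∃ᶠ n in atTop, ε ≤ ‖(f : ∀ _ : ℕ, ℂ) n‖ := by
      by_contra hcon
      push_neg at hcon
      apply h
      rw [NormedAddCommGroup.tendsto_nhds_zero]
      intro ε hε
      have := hcon (ε/2) (by positivity)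
      filter_upwards [this] with n hn
      linarith
    obtain ⟨φ, hφmono, hφ⟩ := Filter.extraction_of_frequently_atTop hfreq
    obtain ⟨K, hK, hKmem⟩ := hc
    obtain ⟨r, hr, hball⟩ := Metric.mem_nhds_iff.1 hKmem
    set u : ℕ → ltwo := fun k => lp.single 2 (φ k) (((r/2 : ℝ) : ℂ)) with hu
    have hunorm : ∀ k, ‖u k‖ = r / 2 := by
      intro k
      have := lp.norm_single (E := fun _ : ℕ => ℂ) (p := 2) (by norm_num) (φ k) ((r/2 : ℝ) : ℂ)
      simp only [Complex.norm_real, Real.norm_eq_abs, abs_of_pos (half_pos hr)] at this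
      exact this
    have humem : ∀ k, T (u k) ∈ K := by
      intro k
      apply hball
      rw [Metric.mem_ball, dist_zero_right, hunorm]
      linarith
    have hsep : ∀ k l : ℕ, k ≠ l → ε * (r / 2) ≤ dist (T (u k)) (T (u l)) := by
      intro k l hkl
      rw [dist_eq_norm]
      have h1 : ‖((T (u k) - T (u l) : ltwo) : ∀ _ : ℕ, ℂ) (φ k)‖ ≤ ‖T (u k) - T (u l)‖ :=
        lp.norm_apply_le_norm (by norm_num) _ _
      refine le_trans ?_ h1
      rw [lp.coeFn_sub, Pi.sub_apply, hT, hT]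
      have hk : (u k : ∀ _ : ℕ, ℂ) (φ k) = ((r/2 : ℝ) : ℂ) := lp.single_apply_self _ _ _
      have hl : (u l : ∀ _ : ℕ, ℂ) (φ k) = 0 :=
        lp.single_apply_ne _ _ _ (fun hkk => hkl (hφmono.injective hkk))
      rw [hk, hl, mul_zero, sub_zero, norm_mul]
      apply mul_le_mul (hφ k) ?_ (by positivity) (le_trans hε.le (hφ k))
      rw [Complex.norm_real, Real.norm_eq_abs, abs_of_pos (half_pos hr)]
    obtain ⟨x, -, ψ, hψmono, hconv⟩ := hK.tendsto_subseq humem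
    have hcauchy := hconv.cauchySeq
    rw [Metric.cauchySeq_iff'] at hcauchy
    obtain ⟨N, hN⟩ := hcauchy (ε * (r/2)) (by positivity)
    have hlt := hN (N+1) (by omega)
    have hne : ψ (N+1) ≠ ψ N := fun hcon => by
      have := hψmono.injective hcon; omega
    exact absurd hlt (not_lt.2 (hsep _ _ hne))
  · -- f ∈ c₀ ⇒ compact
    intro hf
    set S : ℕ → (ltwo →L[ℂ] ltwo) :=
      fun N => ∑ i ∈ Finset.range N, (evCLM i).smulRight (lp.single 2 i ((f : ∀ _ : ℕ, ℂ) i))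
      with hS
    have hsum : ∀ (s : Finset ℕ), IsCompactOperator
        (∑ i ∈ s, (evCLM i).smulRight (lp.single 2 i ((f : ∀ _ : ℕ, ℂ) i)) :
          ltwo →L[ℂ] ltwo) := by
      intro s
      induction s using Finset.induction with
      | empty =>
        rw [Finset.sum_empty]
        exact isCompactOperator_zero
      | @insert a s ha ih =>
        rw [Finset.sum_insert ha]
        exact (isCompactOperator_smulRight _ _).add ih
    have hScompact : ∀ N, IsCompactOperator (S N) := fun N => hsum (Finset.range N)
    have hSapp : ∀ N (g : ltwo) (n : ℕ),
        (S N g : ∀ _ : ℕ, ℂ) n =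
          if n < N then (f : ∀ _ : ℕ, ℂ) n * (g : ∀ _ : ℕ, ℂ) n else 0 := by
      intro N g n
      have hrw : (S N g : ∀ _ : ℕ, ℂ) n = ∑ i ∈ Finset.range N,
          (g : ∀ _ : ℕ, ℂ) i • (lp.single 2 i ((f : ∀ _ : ℕ, ℂ) i) : ∀ _ : ℕ, ℂ) n := by
        simp only [hS, ContinuousLinearMap.sum_apply, ContinuousLinearMap.smulRight_apply]
        rw [lp.coeFn_sum]
        simp only [Finset.sum_apply, lp.coeFn_smul, Pi.smul_apply]
        rfl
      rw [hrw]
      by_cases hn : n < N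
      · rw [Finset.sum_eq_single_of_mem n (Finset.mem_range.2 hn), if_pos hn,
          lp.single_apply_self, smul_eq_mul, mul_comm]
        intro b _ hbn
        rw [lp.single_apply_ne _ _ _ (Ne.symm hbn), smul_zero]
      · rw [if_neg hn]
        apply Finset.sum_eq_zero
        intro b hb
        have hnb : n ≠ b := by rintro rfl; exact hn (Finset.mem_range.1 hb)
        rw [lp.single_apply_ne _ _ _ hnb, smul_zero]
    have htend : Tendsto S atTop (𝓝 T) := by
      rw [Metric.tendsto_atTop]
      intro ε hε
      have := (NormedAddCommGroup.tendsto_nhds_zero.mp hf) (ε/2) (by positivity)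
      obtain ⟨N₀, hN₀⟩ := eventually_atTop.1 this
      refine ⟨N₀, fun N hN => ?_⟩
      rw [dist_eq_norm, ← norm_neg, neg_sub]
      have hbound : ‖T - S N‖ ≤ ε / 2 := by
        apply ContinuousLinearMap.opNorm_le_bound _ (by positivity)
        intro g
        apply lp.norm_le_of_forall_sum_le hp2 (by positivity)
        intro s
        have key : ∀ i : ℕ,
            ‖((T - S N) g : ∀ _ : ℕ, ℂ) i‖ ≤ (ε/2) * ‖(g : ∀ _ : ℕ, ℂ) i‖ := by
          intro i
          rw [ContinuousLinearMap.sub_apply, lp.coeFn_sub, Pi.sub_apply, hT, hSapp]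
          by_cases hi : i < N
          · simp only [hi, if_true, sub_self, norm_zero]
            positivity
          · simp only [hi, if_false, sub_zero, norm_mul]
            exact mul_le_mul_of_nonneg_right (hN₀ i (le_trans hN (not_lt.1 hi))).le
              (norm_nonneg _)
        calc ∑ i ∈ s, ‖((T - S N) g : ∀ _ : ℕ, ℂ) i‖ ^ (2:ℝ≥0∞).toReal
            ≤ ∑ i ∈ s, ((ε/2) * ‖(g : ∀ _ : ℕ, ℂ) i‖) ^ (2:ℝ≥0∞).toReal := by
              apply Finset.sum_le_sum
              intro i _
              exact Real.rpow_le_rpow (norm_nonneg _) (key i) (by norm_num)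
          _ = (ε/2) ^ (2:ℝ≥0∞).toReal * ∑ i ∈ s, ‖(g : ∀ _ : ℕ, ℂ) i‖ ^ (2:ℝ≥0∞).toReal := by
              rw [Finset.mul_sum]
              refine Finset.sum_congr rfl fun i _ => ?_
              rw [Real.mul_rpow (by positivity) (norm_nonneg _)]
          _ ≤ (ε/2) ^ (2:ℝ≥0∞).toReal * ‖g‖ ^ (2:ℝ≥0∞).toReal := by
              apply mul_le_mul_of_nonneg_left (lp.sum_rpow_le_norm_rpow hp2 g s)
              positivity
          _ = ((ε/2) * ‖g‖) ^ (2:ℝ≥0∞).toReal := by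
              rw [Real.mul_rpow (by positivity) (norm_nonneg _)]
      calc ‖T - S N‖ ≤ ε / 2 := hbound
        _ < ε := by linarith
    exact isCompactOperator_of_tendsto htend (Eventually.of_forall hScompact)
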